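/- Let f : ℤ → D be periodic with period 11 such that the values E and W each appear at least once among f(0), …, f(10). Then for any n ≥ 10 and any n consecutive integers, the number of them assigned a value in {E, W} by f is at least 2(n−10)/11 ≥ 2n/11 − 2. -/

import Mathlib

/-- If `f : ℤ → D` is 11-periodic and the distinct values `E` and `W` each appear among
`f 0, …, f 10`, then among any `n ≥ 10` consecutive integers at least `2(n−10)/11 ≥ 2n/11 − 2`
are assigned a value in `{E, W}`. -/
theorem count_EW_in_consecutive (D : Type) [DecidableEq D] (f : ℤ → D) (E W : D)
    (hEW : E ≠ W)
    (hper : ∀ x : ℤ, f (x + 11) = f x)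
    (hE : ∃ x : ℤ, 0 ≤ x ∧ x ≤ 10 ∧ f x = E)
    (hW : ∃ x : ℤ, 0 ≤ x ∧ x ≤ 10 ∧ f x = W)
    (n : ℕ) (hn : 10 ≤ n) (a : ℤ) :
    (2 * ((n : ℝ) - 10) / 11 ≤
      ((Finset.Icc a (a + n - 1)).filter fun i => f i = E ∨ f i = W).card) ∧
    2 * (n : ℝ) / 11 - 2 ≤ 2 * ((n : ℝ) - 10) / 11 := by
  constructor
  · -- main inequality
    have hper' : ∀ (x k : ℤ), f (x + 11 * k) = f x := by
      intro x k
      induction k using Int.induction_on with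
      | zero => simp
      | succ k ih =>
        have h : x + 11 * ((k : ℤ) + 1) = (x + 11 * k) + 11 := by ring
        rw [h, hper, ih]
      | pred k ih =>
        have h := hper (x + 11 * (-(k : ℤ) - 1))
        have h2 : x + 11 * (-(k : ℤ) - 1) + 11 = x + 11 * (-(k : ℤ)) := by ring
        rw [h2] at h
        rw [h] at ih
        exact ih
    obtain ⟨xE, hxE0, hxE10, hxEE⟩ := hE
    obtain ⟨xW, hxW0, hxW10, hxWW⟩ := hW
    set rE := (xE - a) % 11 with hrE
    set rW := (xW - a) % 11 with hrW
    have hrE0 : 0 ≤ rE := Int.emod_nonneg _ (by norm_num)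
    have hrE11 : rE < 11 := Int.emod_lt_of_pos _ (by norm_num)
    have hrW0 : 0 ≤ rW := Int.emod_nonneg _ (by norm_num)
    have hrW11 : rW < 11 := Int.emod_lt_of_pos _ (by norm_num)
    set P : ℕ → ℤ := fun j => a + 11 * (j : ℤ) + rE with hP
    set Q : ℕ → ℤ := fun j => a + 11 * (j : ℤ) + rW with hQ
    have hfP : ∀ j, f (P j) = E := by
      intro j
      have h : P j = xE + 11 * ((j : ℤ) - (xE - a) / 11) := by
        simp only [hP, hrE, Int.emod_def]; ring
      rw [h, hper', hxEE]
    have hfQ : ∀ j, f (Q j) = W := by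
      intro j
      have h : Q j = xW + 11 * ((j : ℤ) - (xW - a) / 11) := by
        simp only [hQ, hrW, Int.emod_def]; ring
      rw [h, hper', hxWW]
    have hrEW : rE ≠ rW := by
      intro h
      apply hEW
      have : P 0 = Q 0 := by simp [hP, hQ, h]
      rw [← hfP 0, this, hfQ 0]
    set m := n / 11 with hm
    set T : Finset ℤ := (Finset.range m).biUnion (fun j => {P j, Q j}) with hT
    have hsub : T ⊆ (Finset.Icc a (a + n - 1)).filter fun i => f i = E ∨ f i = W := by
      intro z hz
      simp only [hT, Finset.mem_biUnion, Finset.mem_range, Finset.mem_insert,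
        Finset.mem_singleton] at hz
      obtain ⟨j, hj, hzeq⟩ := hz
      have hjn : 11 * (j + 1) ≤ n := by
        have := Nat.div_mul_le_self n 11
        omega
      rw [Finset.mem_filter, Finset.mem_Icc]
      rcases hzeq with h | h
      · refine ⟨⟨?_, ?_⟩, Or.inl (h ▸ hfP j)⟩ <;> (simp only [h, hP]; push_cast; omega)
      · refine ⟨⟨?_, ?_⟩, Or.inr (h ▸ hfQ j)⟩ <;> (simp only [h, hQ]; push_cast; omega)
    have hcardT : T.card = 2 * m := by
      rw [hT, Finset.card_biUnion]
      · have : ∀ j, ({P j, Q j} : Finset ℤ).card = 2 := by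
          intro j
          rw [Finset.card_insert_of_notMem (by
            simp only [Finset.mem_singleton, hP, hQ]
            intro h; exact hrEW (by omega)), Finset.card_singleton]
        simp [this, Finset.sum_const, mul_comm]
      · intro j hj k hk hjk
        rw [Finset.mem_coe, Finset.mem_range] at hj hk
        show Disjoint ({P j, Q j} : Finset ℤ) {P k, Q k}
        rw [Finset.disjoint_left]
        intro z hz hz'
        simp only [Finset.mem_insert, Finset.mem_singleton, hP, hQ] at hz hz'
        have hjk' : (j : ℤ) ≠ (k : ℤ) := by exact_mod_cast hjk
        rcases hz with h | h <;> rcases hz' with h' | h' <;> omega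
    have hcard : 2 * m ≤ ((Finset.Icc a (a + n - 1)).filter
        fun i => f i = E ∨ f i = W).card := hcardT ▸ Finset.card_le_card hsub
    have hnm : n ≤ 11 * m + 10 := by omega
    have hcast : (2 * m : ℝ) ≤ ((Finset.Icc a (a + n - 1)).filter
        fun i => f i = E ∨ f i = W).card := by exact_mod_cast hcard
    have hnm' : (n : ℝ) ≤ 11 * (m : ℝ) + 10 := by exact_mod_cast hnm
    linarith
  · linarith [Nat.cast_nonneg (α := ℝ) n]
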